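/- For any β ≥ -3, the function Ψ(v) = ∫₁ᵛ √φ(z) / z^((β+5)/2) dz tends to -∞ as v → 0⁺, where φ(z) = z - ln z - 1. -/

import Mathlib

open intervalIntegral Filter

theorem Psi_tendsto_atBot (β : ℝ) (hβ : -3 ≤ β) :
    Tendsto (fun v : ℝ =>
        ∫ z in (1:ℝ)..v, Real.sqrt (z - Real.log z - 1) / z ^ ((β + 5) / 2))
      (nhdsWithin 0 (Set.Ioi 0)) atBot := by
  set f : ℝ → ℝ := fun z => Real.sqrt (z - Real.log z - 1) / z ^ ((β + 5) / 2) with hf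
  have hp : (1 : ℝ) ≤ (β + 5) / 2 := by linarith
  have hcont : ContinuousOn f (Set.Ioi 0) := by
    apply ContinuousOn.div
    · exact (((continuousOn_id.sub (Real.continuousOn_log.mono
        (fun z hz => ne_of_gt hz))).sub continuousOn_const)).sqrt
    · exact continuousOn_id.rpow_const (fun z hz => Or.inl (ne_of_gt hz))
    · intro z hz
      exact (Real.rpow_pos_of_pos hz _).ne'
  have hint : ∀ c d : ℝ, 0 < c → 0 < d → IntervalIntegrable f MeasureTheory.volume c d := by
    intro c d hc hd
    apply (hcont.mono ?_).intervalIntegrable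
    intro x hx
    rcases Set.mem_uIcc.mp hx with h | h <;>
      exact lt_of_lt_of_le (by simp [hc, hd, lt_min_iff] at *) h.1
  set a : ℝ := Real.exp (-2) with ha
  have ha0 : 0 < a := Real.exp_pos _
  have ha1 : a < 1 := by
    rw [ha, show (1:ℝ) = Real.exp 0 by simp]
    exact Real.exp_lt_exp.mpr (by norm_num)
  set K : ℝ := -Real.log a - ∫ z in a..(1:ℝ), f z with hK
  have hbound : ∀ v : ℝ, v ∈ Set.Ioo 0 a →
      (∫ z in (1:ℝ)..v, f z) ≤ Real.log v + K := by
    intro v hv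
    obtain ⟨hv0, hva⟩ := hv
    have h1 : (∫ z in (1:ℝ)..v, f z) = -((∫ z in v..a, f z) + ∫ z in a..(1:ℝ), f z) := by
      rw [integral_add_adjacent_intervals (hint v a hv0 ha0) (hint a 1 ha0 one_pos),
        integral_symm]
    have hmono : ∀ z ∈ Set.Icc v a, 1 / z ≤ f z := by
      intro z hz
      have hz0 : 0 < z := lt_of_lt_of_le hv0 hz.1
      have hz1 : z ≤ 1 := le_of_lt (lt_of_le_of_lt hz.2 ha1)
      have hlog : Real.log z ≤ -2 := by
        rw [show (-2 : ℝ) = Real.log a by rw [ha, Real.log_exp]]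
        exact Real.log_le_log hz0 hz.2
      have hone : (1 : ℝ) ≤ Real.sqrt (z - Real.log z - 1) :=
        Real.one_le_sqrt.mpr (by linarith)
      have hpow : z ^ ((β + 5) / 2) ≤ z := by
        calc z ^ ((β + 5) / 2) ≤ z ^ (1 : ℝ) :=
              Real.rpow_le_rpow_of_exponent_ge hz0 hz1 hp
          _ = z := Real.rpow_one z
      exact div_le_div₀ (le_trans zero_le_one hone) hone (Real.rpow_pos_of_pos hz0 _) hpow
    have hintdiv : IntervalIntegrable (fun z => 1 / z) MeasureTheory.volume v a := by
      apply ContinuousOn.intervalIntegrable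
      apply ContinuousOn.div continuousOn_const continuousOn_id
      intro x hx
      rw [Set.uIcc_of_le hva.le] at hx
      exact ne_of_gt (lt_of_lt_of_le hv0 hx.1)
    have h2 : Real.log a - Real.log v ≤ ∫ z in v..a, f z := by
      have := integral_mono_on hva.le hintdiv (hint v a hv0 ha0) hmono
      have hdiv : (∫ z in v..a, 1 / z) = Real.log (a / v) := by
        apply integral_one_div
        rw [Set.uIcc_of_le hva.le]
        intro h
        exact absurd h.1 (not_le.mpr hv0)
      rw [hdiv, Real.log_div (ne_of_gt ha0) (ne_of_gt hv0)] at this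
      exact this
    rw [h1, hK]
    linarith
  have hev : ∀ᶠ v in nhdsWithin 0 (Set.Ioi 0),
      (∫ z in (1:ℝ)..v, f z) ≤ Real.log v + K := by
    filter_upwards [Ioo_mem_nhdsGT_of_mem ⟨le_refl 0, ha0⟩] with v hv
    exact hbound v hv
  refine tendsto_atBot_mono' _ hev ?_
  exact tendsto_atBot_add_const_right _ K
    (Real.tendsto_log_nhdsNE_zero.mono_left
      (nhdsWithin_mono _ (fun x hx => ne_of_gt hx)))
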